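/- Let λ ∈ ℂ, p = x − λ ∈ ℂ[x], ι a finite index set, d : ι → ℕ with d(j) ≥ 1 for all j, and V = ⨁_{j ∈ ι} ℂ[x]/(p^{d(j)}). Let i_1 < i_2 < ⋯ < i_m be the distinct values of d, and set Δ_1 = i_1 and Δ_k = i_k − i_{k−1} for k > 1. Let Γ_Δ be the set of tuples (δ_1, …, δ_m) with 0 ≤ δ_k ≤ Δ_k, partially ordered by δ ≤ δ' if and only if δ_1 + ⋯ + δ_k ≤ δ'_1 + ⋯ + δ'_k for all k = 1, …, m. Then the set of fully invariant subspaces of V, ordered by inclusion, is order-isomorphic to Γ_Δ. -/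

import Mathlib

set_option synthInstance.maxHeartbeats 1000000
set_option maxHeartbeats 1000000

open Polynomial DirectSum

/-- A subspace `W` of `V = ⨁_j ℂ[x]/(p^{d j})` is fully invariant if it is preserved by
every `ℂ[x]`-module endomorphism of `V`. -/
def FullyInv (lam : ℂ) (ι : Type*) [DecidableEq ι] (d : ι → ℕ)
    (W : Submodule ℂ (⨁ j : ι, Polynomial ℂ ⧸ Ideal.span {(X - C lam) ^ d j})) : Prop :=
  ∀ φ : (⨁ j : ι, Polynomial ℂ ⧸ Ideal.span {(X - C lam) ^ d j}) →ₗ[Polynomial ℂ]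
      (⨁ j : ι, Polynomial ℂ ⧸ Ideal.span {(X - C lam) ^ d j}),
    ∀ w ∈ W, φ w ∈ W

/-- The poset `Γ_Δ` of tuples `(δ_1, …, δ_m)` with `0 ≤ δ_k ≤ Δ_k`, ordered by
`δ ≤ δ'` iff `δ_1 + ⋯ + δ_k ≤ δ'_1 + ⋯ + δ'_k` for all `k`. -/
def GammaPoset (m : ℕ) (Δ : Fin m → ℕ) : Type := {δ : Fin m → ℕ // ∀ k, δ k ≤ Δ k}

instance (m : ℕ) (Δ : Fin m → ℕ) : Preorder (GammaPoset m Δ) where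
  le r s := ∀ k : Fin m, ∑ j ∈ Finset.Iic k, r.val j ≤ ∑ j ∈ Finset.Iic k, s.val j
  le_refl r k := le_refl _
  le_trans r s t hrs hst k := (hrs k).trans (hst k)

set_option linter.unusedVariables false
set_option linter.unusedSectionVars false

noncomputable section
namespace St13

/-- mk as a linear map -/
def qmap (lam : ℂ) (n : ℕ) :
    Polynomial ℂ →ₗ[Polynomial ℂ] (Polynomial ℂ ⧸ Ideal.span {(X - C lam) ^ n}) :=
  Algebra.linearMap _ _

@[simp] lemma qmap_apply (lam : ℂ) (n : ℕ) (x : Polynomial ℂ) :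
    qmap lam n x = Ideal.Quotient.mk (Ideal.span {(X - C lam) ^ n}) x := by
  simp [qmap, Algebra.linearMap_apply, Ideal.Quotient.algebraMap_eq]

/-- the submodule p^e·(R/p^n) of R/p^n -/
def Mne (lam : ℂ) (n e : ℕ) : Submodule (Polynomial ℂ) (Polynomial ℂ ⧸ Ideal.span {(X - C lam) ^ n}) :=
  Submodule.map (qmap lam n)
    (Ideal.span {(X - C lam) ^ e} : Submodule (Polynomial ℂ) (Polynomial ℂ))

lemma Mne_eq_map_qmap (lam : ℂ) (n e : ℕ) :
    Mne lam n e = Submodule.map (qmap lam n)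
      (Ideal.span {(X - C lam) ^ e} : Submodule (Polynomial ℂ) (Polynomial ℂ)) := by
  unfold Mne qmap
  congr 1

lemma mem_Mne (lam : ℂ) {n e : ℕ} (x : Polynomial ℂ ⧸ Ideal.span {(X - C lam) ^ n}) :
    x ∈ Mne lam n e ↔ ∃ r : Polynomial ℂ,
      Ideal.Quotient.mk (Ideal.span {(X - C lam) ^ n}) ((X - C lam) ^ e * r) = x := by
  constructor
  · rintro ⟨y, hy, rfl⟩
    rcases Ideal.mem_span_singleton'.mp hy with ⟨r, rfl⟩
    exact ⟨r, by rw [qmap_apply]; rw [mul_comm]⟩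
  · rintro ⟨r, rfl⟩
    exact ⟨(X - C lam) ^ e * r, Ideal.mem_span_singleton'.mpr ⟨r, by ring⟩, rfl⟩

lemma prime_p (lam : ℂ) : Prime (X - C lam) := Polynomial.prime_X_sub_C lam

lemma mk_pow_mem_Mne_iff (lam : ℂ) {n e g : ℕ} (he : e ≤ n) :
    Ideal.Quotient.mk (Ideal.span {(X - C lam) ^ n}) ((X - C lam) ^ g) ∈ Mne lam n e ↔ e ≤ g := by
  constructor
  · rintro h
    rcases (mem_Mne lam _).mp h with ⟨r, hr⟩
    have h2 : (X - C lam) ^ e * r - (X - C lam) ^ g ∈ Ideal.span {(X - C lam) ^ n} := by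
      rw [← Ideal.Quotient.eq_zero_iff_mem, map_sub, hr, sub_self]
    rcases Ideal.mem_span_singleton'.mp h2 with ⟨s, hs⟩
    have hdvd : (X - C lam) ^ e ∣ (X - C lam) ^ g := by
      have : (X - C lam) ^ g = (X - C lam) ^ e * r - s * (X - C lam) ^ n := by
        linear_combination hs
      rw [this]
      exact dvd_sub ⟨r, rfl⟩ (Dvd.dvd.mul_left (pow_dvd_pow _ he) s)
    exact (pow_dvd_pow_iff (X_sub_C_ne_zero lam) (prime_p lam).not_unit).mp hdvd
  · intro h
    exact (mem_Mne lam _).mpr ⟨(X - C lam) ^ (g - e), by rw [← pow_add]; congr 2; omega⟩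

lemma Mne_mono (lam : ℂ) {n e f : ℕ} (hfe : f ≤ e) : Mne lam n e ≤ Mne lam n f := by
  intro x hx
  rcases (mem_Mne lam _).mp hx with ⟨r, rfl⟩
  refine (mem_Mne lam _).mpr ⟨(X - C lam) ^ (e - f) * r, ?_⟩
  rw [← mul_assoc, ← pow_add]
  congr 3
  omega

/-- Core: any linear map between blocks maps Mne a e into Mne b f, under the
numerical condition. -/
lemma hom_maps (lam : ℂ) {a b e f : ℕ} (hea : e ≤ a) (hf : f ≤ e + (b - a))
    (ψ : (Polynomial ℂ ⧸ Ideal.span {(X - C lam) ^ a}) →ₗ[Polynomial ℂ]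
         (Polynomial ℂ ⧸ Ideal.span {(X - C lam) ^ b}))
    (x : Polynomial ℂ ⧸ Ideal.span {(X - C lam) ^ a}) (hx : x ∈ Mne lam a e) :
    ψ x ∈ Mne lam b f := by
  rcases (mem_Mne lam _).mp hx with ⟨r, rfl⟩
  obtain ⟨q, hq⟩ := Ideal.Quotient.mk_surjective (I := Ideal.span {(X - C lam) ^ b})
    (ψ (Ideal.Quotient.mk _ 1))
  -- ψ (mk z) = mk (z * q)
  have key : ∀ z : Polynomial ℂ, ψ (Ideal.Quotient.mk _ z) = Ideal.Quotient.mk _ (z * q) := by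
    intro z
    have h1 : (Ideal.Quotient.mk (Ideal.span {(X - C lam) ^ a}) z)
        = z • (Ideal.Quotient.mk _ (1 : Polynomial ℂ)) := by
      rw [← Ideal.Quotient.mk_eq_mk, ← Ideal.Quotient.mk_eq_mk, ← Submodule.Quotient.mk_smul]
      congr 1
      simp [smul_eq_mul]
    rw [h1, map_smul, ← hq]
    rw [← Ideal.Quotient.mk_eq_mk, ← Ideal.Quotient.mk_eq_mk, ← Submodule.Quotient.mk_smul,
      smul_eq_mul]
  have hzero : Ideal.Quotient.mk (Ideal.span {(X - C lam) ^ b}) ((X - C lam) ^ a * q) = 0 := by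
    rw [← key, Ideal.Quotient.eq_zero_iff_mem.mpr (Ideal.mem_span_singleton_self _), map_zero]
  have hdvd : (X - C lam) ^ b ∣ (X - C lam) ^ a * q :=
    Ideal.mem_span_singleton.mp (Ideal.Quotient.eq_zero_iff_mem.mp hzero)
  -- deduce p^f ∣ p^e * q
  have hdvd2 : (X - C lam) ^ f ∣ (X - C lam) ^ e * q := by
    rcases le_or_gt b a with hba | hab
    · have hfe : f ≤ e := by omega
      exact Dvd.dvd.mul_right (pow_dvd_pow _ hfe) q
    · -- a < b : p^(b-a) ∣ q
      rcases hdvd with ⟨t, ht⟩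
      have hq' : q = (X - C lam) ^ (b - a) * t := by
        have hpa : (X - C lam) ^ a ≠ 0 := pow_ne_zero _ (X_sub_C_ne_zero lam)
        apply mul_left_cancel₀ hpa
        rw [ht, ← mul_assoc, ← pow_add]
        congr 2
        omega
      rw [hq', ← mul_assoc, ← pow_add]
      exact Dvd.dvd.mul_right (pow_dvd_pow _ (by omega)) t
  rcases hdvd2 with ⟨t, ht⟩
  rw [key]
  refine (mem_Mne lam _).mpr ⟨t * r, ?_⟩
  congr 1
  rw [← mul_assoc, ← ht]
  ring

/-- classification of submodules of R/p^n -/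
lemma classify_sub (lam : ℂ) (n : ℕ)
    (N : Submodule (Polynomial ℂ) (Polynomial ℂ ⧸ Ideal.span {(X - C lam) ^ n})) :
    ∃ e ≤ n, N = Mne lam n e := by
  obtain ⟨g, hg⟩ := (IsPrincipalIdealRing.principal
    (N.comap (qmap lam n) : Ideal (Polynomial ℂ))).principal
  have hpnJ : (X - C lam) ^ n ∈ N.comap (qmap lam n) := by
    have : qmap lam n ((X - C lam) ^ n) = 0 := by
      rw [qmap_apply]
      exact Ideal.Quotient.eq_zero_iff_mem.mpr (Ideal.mem_span_singleton_self _)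
    rw [Submodule.mem_comap, this]
    exact N.zero_mem
  have hgdvd : g ∣ (X - C lam) ^ n := by
    rw [hg] at hpnJ
    exact Ideal.mem_span_singleton.mp hpnJ
  obtain ⟨e, hen, hassoc⟩ := (dvd_prime_pow (prime_p lam) n).mp hgdvd
  refine ⟨e, hen, ?_⟩
  have hJe : (N.comap (qmap lam n) : Ideal (Polynomial ℂ))
      = Ideal.span {(X - C lam) ^ e} := by
    rw [hg]
    exact Ideal.span_singleton_eq_span_singleton.mpr hassoc
  have hNle : N ≤ LinearMap.range (qmap lam n) := by
    intro x _
    obtain ⟨y, hy⟩ := Ideal.Quotient.mk_surjective x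
    exact ⟨y, by rw [qmap_apply]; exact hy⟩
  calc N = Submodule.map (qmap lam n)
        (N.comap (qmap lam n)) := (Submodule.map_comap_eq_self hNle).symm
    _ = Mne lam n e := by
        rw [hJe, Mne_eq_map_qmap]

abbrev Vj (lam : ℂ) {ι : Type*} (d : ι → ℕ) (j : ι) :=
  Polynomial ℂ ⧸ Ideal.span {(X - C lam) ^ d j}

variable {lam : ℂ} {ι : Type*} [Fintype ι] [DecidableEq ι] {d : ι → ℕ}

/-- the candidate fully invariant submodule -/
def Wsub (lam : ℂ) (d : ι → ℕ) (c : ι → ℕ) :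
    Submodule (Polynomial ℂ) (⨁ j : ι, Vj lam d j) :=
  ⨅ j : ι, (Mne lam (d j) (c j)).comap (DirectSum.component (Polynomial ℂ) ι (Vj lam d) j)

omit [Fintype ι] in
lemma mem_Wsub (c : ι → ℕ) (v : ⨁ j : ι, Vj lam d j) :
    v ∈ Wsub lam d c ↔ ∀ j, v j ∈ Mne lam (d j) (c j) := by
  simp only [Wsub, Submodule.mem_iInf, Submodule.mem_comap]
  rfl

def WsubC (lam : ℂ) (d : ι → ℕ) (c : ι → ℕ) :
    Submodule ℂ (⨁ j : ι, Vj lam d j) :=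
  (Wsub lam d c).restrictScalars ℂ

omit [Fintype ι] in
lemma mem_WsubC (c : ι → ℕ) (v : ⨁ j : ι, Vj lam d j) :
    v ∈ WsubC lam d c ↔ ∀ j, v j ∈ Mne lam (d j) (c j) :=
  mem_Wsub c v

omit [Fintype ι] in
lemma lof_mem_WsubC (c : ι → ℕ) (j : ι) (x : Vj lam d j) :
    lof (Polynomial ℂ) ι (Vj lam d) j x ∈ WsubC lam d c ↔ x ∈ Mne lam (d j) (c j) := by
  rw [mem_WsubC]
  constructor
  · intro h
    have := h j
    rwa [lof_apply] at this
  · intro h j'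
    rw [apply_eq_component (Polynomial ℂ), component.of]
    by_cases hjj : j = j'
    · subst hjj; simpa
    · simp [hjj, Submodule.zero_mem]

lemma fullyInv_WsubC (c : ι → ℕ) (hc1 : ∀ j, c j ≤ d j)
    (hc2 : ∀ j j', c j' ≤ c j + (d j' - d j)) :
    FullyInv lam ι d (WsubC lam d c) := by
  intro φ v hv
  rw [mem_WsubC] at hv ⊢
  intro j'
  have hv' : φ v = ∑ j : ι, φ (lof (Polynomial ℂ) ι (Vj lam d) j (v j)) := by
    conv_lhs => rw [← DirectSum.sum_univ_of (β := Vj lam d) v]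
    rw [map_sum]
    rfl
  rw [hv', DFinsupp.finset_sum_apply]
  apply Submodule.sum_mem
  intro j _
  have : (φ (lof (Polynomial ℂ) ι (Vj lam d) j (v j))) j'
      = ((DirectSum.component (Polynomial ℂ) ι (Vj lam d) j').comp
          (φ.comp (lof (Polynomial ℂ) ι (Vj lam d) j))) (v j) := rfl
  rw [this]
  exact hom_maps lam (hc1 j) (hc2 j j') _ _ (hv j)

/-- an R-submodule from a fully invariant ℂ-submodule -/
def toR (W : Submodule ℂ (⨁ j : ι, Vj lam d j)) (hW : FullyInv lam ι d W) :
    Submodule (Polynomial ℂ) (⨁ j : ι, Vj lam d j) where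
  carrier := W
  add_mem' := W.add_mem
  zero_mem' := W.zero_mem
  smul_mem' := by
    intro r v hv
    have := hW (r • (LinearMap.id : (⨁ j : ι, Vj lam d j) →ₗ[Polynomial ℂ] _)) v hv
    simpa using this

/-- the mult-by-p^(b-a) map between blocks -/
def shiftMap (lam : ℂ) (a b : ℕ) :
    (Polynomial ℂ ⧸ Ideal.span {(X - C lam) ^ a}) →ₗ[Polynomial ℂ]
    (Polynomial ℂ ⧸ Ideal.span {(X - C lam) ^ b}) :=
  Submodule.liftQ _ ((qmap lam b).comp (LinearMap.lsmul (Polynomial ℂ) (Polynomial ℂ)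
      ((X - C lam) ^ (b - a)))) (by
    intro x hx
    rcases Ideal.mem_span_singleton'.mp hx with ⟨t, rfl⟩
    simp only [LinearMap.mem_ker, LinearMap.comp_apply, LinearMap.lsmul_apply, smul_eq_mul,
      qmap_apply]
    rw [Ideal.Quotient.eq_zero_iff_mem, Ideal.mem_span_singleton]
    have : (X - C lam) ^ (b - a) * (t * (X - C lam) ^ a) = t * (X - C lam) ^ (b - a + a) := by
      rw [pow_add]; ring
    rw [this]
    exact Dvd.dvd.mul_left (pow_dvd_pow _ (by omega)) t)

lemma shiftMap_apply (lam : ℂ) (a b : ℕ) (z : Polynomial ℂ) :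
    shiftMap lam a b (Ideal.Quotient.mk _ z)
      = Ideal.Quotient.mk _ ((X - C lam) ^ (b - a) * z) := by
  rw [← Ideal.Quotient.mk_eq_mk, shiftMap, Submodule.liftQ_apply, LinearMap.comp_apply,
    LinearMap.lsmul_apply, smul_eq_mul, qmap_apply]

theorem classify_W (W : Submodule ℂ (⨁ j : ι, Vj lam d j)) (hW : FullyInv lam ι d W) :
    ∃ c : ι → ℕ, (∀ j, c j ≤ d j) ∧ (∀ j j', c j' ≤ c j + (d j' - d j)) ∧
      W = WsubC lam d c := by
  classical
  set WR := toR W hW with hWR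
  -- the block submodules
  have hNj := fun j : ι => classify_sub lam (d j) (WR.comap (lof (Polynomial ℂ) ι (Vj lam d) j))
  choose e he1 he2 using hNj
  -- membership characterization
  have hmem : ∀ j (x : Vj lam d j),
      (lof (Polynomial ℂ) ι (Vj lam d) j x ∈ W) ↔ x ∈ Mne lam (d j) (e j) := by
    intro j x
    rw [← he2 j]
    rfl
  -- mk p^{e j} realizes the exponent
  have hgen : ∀ j, lof (Polynomial ℂ) ι (Vj lam d) j
      (Ideal.Quotient.mk _ ((X - C lam) ^ (e j))) ∈ W := by
    intro j
    rw [hmem j]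
    exact (mem_Mne lam _).mpr ⟨1, by rw [mul_one]⟩
  refine ⟨e, he1, ?_, ?_⟩
  · -- compatibility
    intro j j'
    have hτ := hW ((lof (Polynomial ℂ) ι (Vj lam d) j').comp
        ((shiftMap lam (d j) (d j')).comp (DirectSum.component (Polynomial ℂ) ι (Vj lam d) j)))
      _ (hgen j)
    rw [LinearMap.comp_apply, LinearMap.comp_apply] at hτ
    rw [← apply_eq_component, lof_apply, shiftMap_apply, hmem j'] at hτ
    rw [← pow_add] at hτ
    have := (mk_pow_mem_Mne_iff lam (he1 j')).mp hτ
    omega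
  · -- W = WsubC e
    ext v
    rw [mem_WsubC]
    constructor
    · intro hv j
      have hπ := hW ((lof (Polynomial ℂ) ι (Vj lam d) j).comp
          (DirectSum.component (Polynomial ℂ) ι (Vj lam d) j)) v hv
      rw [LinearMap.comp_apply, ← apply_eq_component, hmem j] at hπ
      exact hπ
    · intro hv
      have hv' : v = ∑ j : ι, lof (Polynomial ℂ) ι (Vj lam d) j (v j) :=
        (DirectSum.sum_univ_of (β := Vj lam d) v).symm
      have hsum : (∑ j : ι, lof (Polynomial ℂ) ι (Vj lam d) j (v j)) ∈ W :=
        Submodule.sum_mem _ (fun j _ => (hmem j _).mpr (hv j))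
      rwa [← hv'] at hsum

omit [Fintype ι] in
lemma WsubC_le_iff (c c' : ι → ℕ) (hc : ∀ j, c j ≤ d j) (hc' : ∀ j, c' j ≤ d j) :
    WsubC lam d c ≤ WsubC lam d c' ↔ ∀ j, c' j ≤ c j := by
  constructor
  · intro h j
    have hx : lof (Polynomial ℂ) ι (Vj lam d) j
        (Ideal.Quotient.mk _ ((X - C lam) ^ (c j))) ∈ WsubC lam d c := by
      rw [lof_mem_WsubC]
      exact (mem_Mne lam _).mpr ⟨1, by rw [mul_one]⟩
    have := h hx
    rw [lof_mem_WsubC] at this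
    exact (mk_pow_mem_Mne_iff lam (hc' j)).mp this
  · intro h v hv
    rw [mem_WsubC] at hv ⊢
    exact fun j => Mne_mono lam (h j) (hv j)

omit [Fintype ι] in
lemma WsubC_inj (c c' : ι → ℕ) (hc : ∀ j, c j ≤ d j) (hc' : ∀ j, c' j ≤ d j)
    (h : WsubC lam d c = WsubC lam d c') : c = c' := by
  funext j
  have h1 := (WsubC_le_iff c c' hc hc').mp h.le j
  have h2 := (WsubC_le_iff c' c hc' hc).mp h.ge j
  omega


/-- predecessor in Fin m -/
def kpred {m : ℕ} (k : Fin m) : Fin m :=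
  ⟨k.val - 1, Nat.lt_of_le_of_lt (Nat.sub_le _ _) k.isLt⟩

lemma Iic_eq_singleton {m : ℕ} (k : Fin m) (hk : k.val = 0) : Finset.Iic k = {k} := by
  ext j
  simp only [Finset.mem_Iic, Finset.mem_singleton, Fin.le_def, Fin.ext_iff]
  omega

lemma not_mem_Iic_kpred {m : ℕ} (k : Fin m) (hk : k.val ≠ 0) : k ∉ Finset.Iic (kpred k) := by
  simp only [Finset.mem_Iic, Fin.le_def, kpred]
  omega

lemma Iic_eq_insert {m : ℕ} (k : Fin m) (hk : k.val ≠ 0) :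
    Finset.Iic k = insert k (Finset.Iic (kpred k)) := by
  ext j
  simp only [Finset.mem_Iic, Finset.mem_insert, Fin.le_def, Fin.ext_iff, kpred]
  omega

/-- telescoping sums over Iic -/
lemma sum_Iic_eq {m : ℕ} (f S : Fin m → ℕ)
    (h0 : ∀ k : Fin m, k.val = 0 → f k = S k)
    (hstep : ∀ k : Fin m, k.val ≠ 0 → f k + S (kpred k) = S k) :
    ∀ k : Fin m, ∑ j ∈ Finset.Iic k, f j = S k := by
  suffices h : ∀ (n : ℕ) (k : Fin m), k.val = n → ∑ j ∈ Finset.Iic k, f j = S k by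
    exact fun k => h k.val k rfl
  intro n
  induction n with
  | zero => intro k hk; rw [Iic_eq_singleton k hk, Finset.sum_singleton]; exact h0 k hk
  | succ n ih =>
      intro k hk
      have hne : k.val ≠ 0 := by omega
      rw [Iic_eq_insert k hne, Finset.sum_insert (not_mem_Iic_kpred k hne),
        ih (kpred k) (by simp [kpred]; omega)]
      exact hstep k hne

end St13
end

theorem stmt13 (lam : ℂ) (ι : Type*) [Fintype ι] [DecidableEq ι]
    (d : ι → ℕ) (hd : ∀ j, 1 ≤ d j)
    (m : ℕ) (i : Fin m → ℕ) (hmono : StrictMono i)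
    (hrange : ∀ j : ι, ∃ k : Fin m, d j = i k) (hsur : ∀ k : Fin m, ∃ j : ι, d j = i k)
    (Δ : Fin m → ℕ)
    (hΔ : ∀ k : Fin m, Δ k = if k.val = 0 then i k
      else i k - i ⟨k.val - 1, Nat.lt_of_le_of_lt (Nat.sub_le _ _) k.isLt⟩) :
    Nonempty
      ({W : Submodule ℂ (⨁ j : ι, Polynomial ℂ ⧸ Ideal.span {(X - C lam) ^ d j}) //
          FullyInv lam ι d W} ≃o GammaPoset m Δ) := by
  classical
  choose kof hkof using hrange   -- hkof : ∀ j, d j = i (kof j)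
  choose jof hjof using hsur     -- hjof : ∀ k, d (jof k) = i k
  have hkplt : ∀ k : Fin m, k.val ≠ 0 → St13.kpred k < k := by
    intro k hk
    rw [Fin.lt_def]
    simp only [St13.kpred]
    omega
  have hsumΔ : ∀ k : Fin m, ∑ j ∈ Finset.Iic k, Δ j = i k := by
    apply St13.sum_Iic_eq
    · intro k hk; rw [hΔ k, if_pos hk]
    · intro k hk
      rw [hΔ k, if_neg hk]
      have h1 : i (St13.kpred k) ≤ i k := (hmono (hkplt k hk)).le
      show i k - i (St13.kpred k) + i (St13.kpred k) = i k
      omega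
  obtain ⟨Sd, hSdDef⟩ : ∃ x : GammaPoset m Δ → Fin m → ℕ,
      x = fun δ k => ∑ j ∈ Finset.Iic k, δ.val j := ⟨_, rfl⟩
  have hSdmono : ∀ δ (k k' : Fin m), k ≤ k' → Sd δ k ≤ Sd δ k' := by
    intro δ k k' h
    simp only [hSdDef]
    exact Finset.sum_le_sum_of_subset (Finset.Iic_subset_Iic.mpr h)
  have hSdle : ∀ δ (k : Fin m), Sd δ k ≤ i k := by
    intro δ k
    simp only [hSdDef]
    calc ∑ j ∈ Finset.Iic k, δ.val j ≤ ∑ j ∈ Finset.Iic k, Δ j :=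
          Finset.sum_le_sum (fun j _ => δ.2 j)
    _ = i k := hsumΔ k
  have hSdgap : ∀ δ (k k' : Fin m), k' ≤ k → Sd δ k ≤ Sd δ k' + (i k - i k') := by
    intro δ k k' h
    have hsub : Finset.Iic k' ⊆ Finset.Iic k := Finset.Iic_subset_Iic.mpr h
    have e1 : ∑ j ∈ Finset.Iic k \ Finset.Iic k', δ.val j + ∑ j ∈ Finset.Iic k', δ.val j
        = ∑ j ∈ Finset.Iic k, δ.val j := Finset.sum_sdiff hsub
    have e2 : ∑ j ∈ Finset.Iic k \ Finset.Iic k', Δ j + ∑ j ∈ Finset.Iic k', Δ j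
        = ∑ j ∈ Finset.Iic k, Δ j := Finset.sum_sdiff hsub
    have e3 : ∑ j ∈ Finset.Iic k \ Finset.Iic k', δ.val j
        ≤ ∑ j ∈ Finset.Iic k \ Finset.Iic k', Δ j :=
      Finset.sum_le_sum (fun j _ => δ.2 j)
    have e4 := hsumΔ k
    have e5 := hsumΔ k'
    simp only [hSdDef]
    omega
  obtain ⟨cf, hcf⟩ : ∃ x : GammaPoset m Δ → ι → ℕ,
      x = fun δ j => i (kof j) - Sd δ (kof j) := ⟨_, rfl⟩
  have hcf1 : ∀ δ j, cf δ j ≤ d j := by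
    intro δ j
    have := hkof j
    simp only [hcf]
    omega
  have hcf2 : ∀ δ (j j' : ι), cf δ j' ≤ cf δ j + (d j' - d j) := by
    intro δ j j'
    have h1 := hkof j
    have h2 := hkof j'
    have hS1 := hSdle δ (kof j)
    have hS2 := hSdle δ (kof j')
    rcases le_total (kof j) (kof j') with h | h
    · have g1 := hSdmono δ _ _ h
      have g2 := hmono.le_iff_le.mpr h
      simp only [hcf]
      omega
    · have g1 := hSdgap δ _ _ h
      have g2 := hmono.le_iff_le.mpr h
      simp only [hcf]
      omega
  obtain ⟨G, hG⟩ : ∃ x : GammaPoset m Δ →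
      {W : Submodule ℂ (⨁ j : ι, Polynomial ℂ ⧸ Ideal.span {(X - C lam) ^ d j}) //
          FullyInv lam ι d W},
      x = fun δ => ⟨St13.WsubC lam d (cf δ), St13.fullyInv_WsubC (cf δ) (hcf1 δ) (hcf2 δ)⟩ :=
    ⟨_, rfl⟩
  have classify := fun (Wp : {W : Submodule ℂ
      (⨁ j : ι, Polynomial ℂ ⧸ Ideal.span {(X - C lam) ^ d j}) // FullyInv lam ι d W}) =>
    St13.classify_W Wp.1 Wp.2
  obtain ⟨cW, hcW⟩ : ∃ x : {W : Submodule ℂ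
        (⨁ j : ι, Polynomial ℂ ⧸ Ideal.span {(X - C lam) ^ d j}) // FullyInv lam ι d W} →
        ι → ℕ,
      x = fun Wp => Classical.choose (classify Wp) := ⟨_, rfl⟩
  have hcWspec : ∀ Wp, (∀ j, cW Wp j ≤ d j) ∧ (∀ j j', cW Wp j' ≤ cW Wp j + (d j' - d j)) ∧
      Wp.1 = St13.WsubC lam d (cW Wp) :=
    fun Wp => by rw [hcW]; exact Classical.choose_spec (classify Wp)
  obtain ⟨Ef, hEf⟩ : ∃ x, x = fun Wp (k : Fin m) => cW Wp (jof k) := ⟨_, rfl⟩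
  have hEfle : ∀ Wp (k : Fin m), Ef Wp k ≤ i k := by
    intro Wp k
    have h1 := (hcWspec Wp).1 (jof k)
    have h2 := hjof k
    simp only [hEf]
    omega
  have hEfpair : ∀ Wp (k k' : Fin m), Ef Wp k' ≤ Ef Wp k + (i k' - i k) := by
    intro Wp k k'
    have h1 := (hcWspec Wp).2.1 (jof k) (jof k')
    have h2 := hjof k
    have h3 := hjof k'
    simp only [hEf]
    omega
  have hEmono : ∀ Wp (k k' : Fin m), k' ≤ k → Ef Wp k' ≤ Ef Wp k := by
    intro Wp k k' h
    have h1 := hEfpair Wp k k'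
    have h2 := hmono.le_iff_le.mpr h
    omega
  obtain ⟨Sf, hSf⟩ : ∃ x, x = fun Wp (k : Fin m) => i k - Ef Wp k := ⟨_, rfl⟩
  obtain ⟨δF, hδF⟩ : ∃ x, x = fun Wp (k : Fin m) =>
      if k.val = 0 then Sf Wp k else Sf Wp k - Sf Wp (St13.kpred k) := ⟨_, rfl⟩
  have hδFle : ∀ Wp (k : Fin m), δF Wp k ≤ Δ k := by
    intro Wp k
    by_cases hk : k.val = 0
    · simp only [hδF, hSf]
      rw [if_pos hk, hΔ k, if_pos hk]
      omega
    · have hkp : St13.kpred k ≤ k := (hkplt k hk).le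
      have h1 := hEmono Wp k _ hkp
      have h3 := hEfle Wp k
      have h4 := hEfle Wp (St13.kpred k)
      have h5 : i (St13.kpred k) ≤ i k := hmono.le_iff_le.mpr hkp
      simp only [hδF, hSf]
      rw [if_neg hk, hΔ k, if_neg hk]
      show i k - Ef Wp k - (i (St13.kpred k) - Ef Wp (St13.kpred k))
        ≤ i k - i (St13.kpred k)
      omega
  have hSfkey : ∀ Wp (k : Fin m), ∑ j ∈ Finset.Iic k, δF Wp j = Sf Wp k := by
    intro Wp
    apply St13.sum_Iic_eq
    · intro k hk
      simp only [hδF]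
      rw [if_pos hk]
    · intro k hk
      have hkp : St13.kpred k ≤ k := (hkplt k hk).le
      have h1 := hEmono Wp k _ hkp
      have h3 := hEfle Wp k
      have h4 := hEfle Wp (St13.kpred k)
      have h5 : i (St13.kpred k) ≤ i k := hmono.le_iff_le.mpr hkp
      have h2 := hEfpair Wp (St13.kpred k) k
      simp only [hδF, hSf]
      rw [if_neg hk]
      omega
  obtain ⟨F, hF⟩ : ∃ x : {W : Submodule ℂ
        (⨁ j : ι, Polynomial ℂ ⧸ Ideal.span {(X - C lam) ^ d j}) //
        FullyInv lam ι d W} → GammaPoset m Δ,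
      x = fun Wp => ⟨δF Wp, hδFle Wp⟩ := ⟨_, rfl⟩
  have hkofjof : ∀ k, kof (jof k) = k := fun k =>
    hmono.injective ((hkof (jof k)).symm.trans (hjof k))
  have hGspec : ∀ δ, cW (G δ) = cf δ := by
    intro δ
    have h3 := (hcWspec (G δ)).2.2
    have h4 : (G δ).1 = St13.WsubC lam d (cf δ) := by rw [hG]
    exact St13.WsubC_inj _ _ ((hcWspec (G δ)).1) (hcf1 δ) (h3.symm.trans h4)
  have hEfG : ∀ δ k, Ef (G δ) k = i k - Sd δ k := by
    intro δ k
    simp only [hEf]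
    rw [hGspec δ]
    simp only [hcf]
    rw [hkofjof k]
  have hFG : ∀ δ, F (G δ) = δ := by
    intro δ
    apply Subtype.ext
    funext k
    have hd0 : ∀ k : Fin m, k.val = 0 → Sd δ k = δ.val k := by
      intro k hk
      simp only [hSdDef]
      rw [St13.Iic_eq_singleton k hk, Finset.sum_singleton]
    have hdstep : ∀ k : Fin m, k.val ≠ 0 → δ.val k + Sd δ (St13.kpred k) = Sd δ k := by
      intro k hk
      simp only [hSdDef]
      rw [St13.Iic_eq_insert k hk, Finset.sum_insert (St13.not_mem_Iic_kpred k hk)]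
    show (F (G δ)).val k = δ.val k
    simp only [hF, hδF, hSf]
    by_cases hk : k.val = 0
    · rw [if_pos hk, hEfG δ k]
      have h1 := hSdle δ k
      have h2 := hd0 k hk
      omega
    · rw [if_neg hk, hEfG δ k, hEfG δ (St13.kpred k)]
      have h1 := hSdle δ k
      have h2 := hSdle δ (St13.kpred k)
      have h3 := hdstep k hk
      have h4 : i (St13.kpred k) ≤ i k := hmono.le_iff_le.mpr (hkplt k hk).le
      omega
  have hcWkof : ∀ Wp j, cW Wp j = Ef Wp (kof j) := by
    intro Wp j
    have hdd : d (jof (kof j)) = d j := by rw [hjof (kof j), ← hkof j]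
    have p1 := (hcWspec Wp).2.1 j (jof (kof j))
    have p2 := (hcWspec Wp).2.1 (jof (kof j)) j
    simp only [hEf]
    omega
  have hGF : ∀ Wp, G (F Wp) = Wp := by
    intro Wp
    apply Subtype.ext
    have h3 := (hcWspec Wp).2.2
    show (G (F Wp)).val = Wp.val
    simp only [hG]
    rw [h3]
    congr 1
    funext j
    have hkey := hSfkey Wp (kof j)
    have hsd : Sd (F Wp) (kof j) = Sf Wp (kof j) := by
      simp only [hSdDef, hF]
      exact hkey
    simp only [hcf]
    rw [hsd]
    have h4 := hEfle Wp (kof j)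
    have h5 := hcWkof Wp j
    simp only [hSf]
    omega
  have hrel : ∀ Wp Wp', (F Wp ≤ F Wp') ↔ Wp ≤ Wp' := by
    intro Wp Wp'
    have hle1 : (F Wp ≤ F Wp') ↔ ∀ k, Sf Wp k ≤ Sf Wp' k := by
      constructor
      · intro h k
        have h2 := h k
        simp only [hF] at h2
        rwa [hSfkey Wp k, hSfkey Wp' k] at h2
      · intro h k
        show ∑ j ∈ Finset.Iic k, (F Wp).val j ≤ ∑ j ∈ Finset.Iic k, (F Wp').val j
        simp only [hF]
        rw [hSfkey Wp k, hSfkey Wp' k]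
        exact h k
    have hle2 : (∀ k, Sf Wp k ≤ Sf Wp' k) ↔ ∀ j, cW Wp' j ≤ cW Wp j := by
      constructor
      · intro h j
        rw [hcWkof Wp j, hcWkof Wp' j]
        have h0 := h (kof j)
        have h1 := hEfle Wp (kof j)
        have h2 := hEfle Wp' (kof j)
        simp only [hSf] at h0
        omega
      · intro h k
        have h0 : cW Wp' (jof k) ≤ cW Wp (jof k) := h (jof k)
        simp only [hSf, hEf]
        omega
    have hle3 : (Wp ≤ Wp') ↔ ∀ j, cW Wp' j ≤ cW Wp j := by
      have e1 := (hcWspec Wp).2.2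
      have e2 := (hcWspec Wp').2.2
      constructor
      · intro h
        refine (St13.WsubC_le_iff (lam := lam) _ _ (hcWspec Wp).1 (hcWspec Wp').1).mp ?_
        rw [← e1, ← e2]
        exact h
      · intro h
        have h2 := (St13.WsubC_le_iff (lam := lam) _ _ (hcWspec Wp).1 (hcWspec Wp').1).mpr h
        rw [← e1, ← e2] at h2
        exact h2
    rw [hle1, hle2, ← hle3]
  exact ⟨⟨⟨F, G, hGF, hFG⟩, hrel _ _⟩⟩
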